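/- For every i = 1, …, l and every character ν : Q → ℂ^×, σ_{ω_i,ν}(U(𝔫̄)𝔫̄₊) ⊆ I_{λ_0}; in particular, for every positive root β and every m ≥ 0, τ_{ω_i,ν}(x_β(m)) x_{α_i}(−1) ∈ I_{λ_0}. -/

import Mathlib

/-- The data of a finite-dimensional complex simple Lie algebra `𝔤` of type `A`, `D` or `E`
of rank `l`, recorded through: its Cartan matrix `M`; its set `Δ` of positive roots, each
written via its coordinates in the basis of simple roots (so the `i`-th simple root is
`Pi.single i 1`); and the affinization `𝔫̄ = 𝔫 ⊗ ℂ[t,t⁻¹]` of the nilpotent subalgebra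
`𝔫 = ⊕_{α ∈ Δ} ℂx_α`, where `x α m` stands for `x_α ⊗ t^m`.  The weight lattice `P` is
identified with `ℤ^l` via `λ ↦ (⟨λ, α_j⟩)_j`, so that `⟨λ, α⟩ = ∑_j ⟨λ, α_j⟩ α^j` for a
positive root `α` with simple-root coordinates `α^j`; in particular `⟨λ_i, α⟩ = α^i` and
`⟨α_i, α⟩ = ∑_j m_{ij} α^j`. -/
structure ADEContext where
  /-- the rank -/
  l : ℕ
  hl : 0 < l
  /-- the Cartan matrix -/
  M : Matrix (Fin l) (Fin l) ℤ
  M_symm : M.IsSymm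
  M_diag : ∀ i, M i i = 2
  M_offdiag : ∀ i j, i ≠ j → M i j = 0 ∨ M i j = -1
  M_posdef : (M.map ((↑) : ℤ → ℝ)).PosDef
  /-- the set of positive roots, in simple-root coordinates -/
  Δ : Finset (Fin l → ℤ)
  Δ_nonneg : ∀ α ∈ Δ, ∀ j, 0 ≤ α j
  Δ_ne_zero : ∀ α ∈ Δ, α ≠ 0
  simple_mem : ∀ i : Fin l, (Pi.single i 1 : Fin l → ℤ) ∈ Δ
  /-- every nonsimple positive root is a positive root plus a simple root -/
  Δ_decomp : ∀ α ∈ Δ, (∀ i : Fin l, α ≠ Pi.single i 1) →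
    ∃ β ∈ Δ, ∃ i : Fin l, α = β + Pi.single i 1
  /-- `α_i + α_j` is a root iff `i ≠ j` and `m_{ij} = -1` (simply-laced types) -/
  sum_simple_mem_iff : ∀ i j : Fin l,
    ((Pi.single i 1 + Pi.single j 1 : Fin l → ℤ) ∈ Δ) ↔ (i ≠ j ∧ M i j = -1)
  /-- `2α_i + α_j` is never a root (simply-laced types) -/
  two_simple_add_not_mem : ∀ i j : Fin l,
    ((2 : ℤ) • (Pi.single i 1 : Fin l → ℤ) + Pi.single j 1) ∉ Δ
  /-- the underlying type of the affinization `𝔫̄ = 𝔫 ⊗ ℂ[t,t⁻¹]` -/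
  nbar : Type
  [instLieRing : LieRing nbar]
  [instLieAlgebra : LieAlgebra ℂ nbar]
  /-- `x α m` is the element `x_α ⊗ t^m` of `𝔫̄` -/
  x : (Fin l → ℤ) → ℤ → nbar
  /-- the elements `x_α ⊗ t^m`, `α ∈ Δ`, `m ∈ ℤ`, form a `ℂ`-basis of `𝔫̄` -/
  basis : Module.Basis ({α // α ∈ Δ} × ℤ) ℂ nbar
  basis_eq : ∀ (α : {α // α ∈ Δ}) (m : ℤ), basis (α, m) = x α.1 m
  /-- the structure constants: `[x_α, x_β] = C_{α,β} x_{α+β}` -/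
  C : (Fin l → ℤ) → (Fin l → ℤ) → ℂ
  C_ne_zero : ∀ α ∈ Δ, ∀ β ∈ Δ, α + β ∈ Δ → C α β ≠ 0
  /-- the bracket `[x ⊗ t^m, y ⊗ t^n] = [x,y] ⊗ t^{m+n}` on `𝔫̄` -/
  bracket_x : ∀ α ∈ Δ, ∀ β ∈ Δ, ∀ m n : ℤ,
    ⁅x α m, x β n⁆ = if α + β ∈ Δ then C α β • x (α + β) (m + n) else 0

attribute [instance] ADEContext.instLieRing ADEContext.instLieAlgebra

namespace ADEContext

variable (ctx : ADEContext)

/-- the universal enveloping algebra `U(𝔫̄)` -/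
abbrev U : Type := UniversalEnvelopingAlgebra ℂ ctx.nbar

/-- the element `x_α(m) = x_α ⊗ t^m`, viewed in `U(𝔫̄)` -/
noncomputable def X (α : Fin ctx.l → ℤ) (m : ℤ) : ctx.U :=
  UniversalEnvelopingAlgebra.ι ℂ (ctx.x α m)

/-- the `i`-th simple root `α_i`, in simple-root coordinates -/
def sroot (i : Fin ctx.l) : Fin ctx.l → ℤ := Pi.single i 1

/-- the left ideal `U(𝔫̄)𝔫̄₊` of `U(𝔫̄)` generated by `𝔫̄₊ = 𝔫 ⊗ ℂ[t]` (equivalently, by the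
elements `x_α(m)`, `α ∈ Δ`, `m ≥ 0`, which span `𝔫̄₊`) -/
noncomputable def Uplus : Submodule ctx.U ctx.U :=
  Submodule.span ctx.U {u | ∃ α ∈ ctx.Δ, ∃ m : ℤ, 0 ≤ m ∧ u = ctx.X α m}

/-- the truncated relation `R^j_{-1,t} = ∑_{m₁,m₂ ≤ -1, m₁+m₂=-t} x_{α_j}(m₁)x_{α_j}(m₂)` -/
noncomputable def R (j : Fin ctx.l) (t : ℤ) : ctx.U :=
  ∑ m ∈ Finset.Icc (1 - t) (-1 : ℤ), ctx.X (ctx.sroot j) m * ctx.X (ctx.sroot j) (-t - m)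

/-- the left ideal `J` of `U(𝔫̄)` generated by the `R^j_{-1,t}`, `j = 1, …, l`, `t ≥ 2` -/
noncomputable def Jideal : Submodule ctx.U ctx.U :=
  Submodule.span ctx.U {u | ∃ j : Fin ctx.l, ∃ t : ℤ, 2 ≤ t ∧ u = ctx.R j t}

/-- the left ideal `I_{λ_0} = J + U(𝔫̄)𝔫̄₊` -/
noncomputable def I0 : Submodule ctx.U ctx.U := ctx.Jideal ⊔ ctx.Uplus

/-- the left ideal `I_{λ_i} = I_{λ_0} + U(𝔫̄)x_{α_i}(-1)`, `i = 1, …, l` -/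
noncomputable def Ii (i : Fin ctx.l) : Submodule ctx.U ctx.U :=
  ctx.I0 ⊔ Submodule.span ctx.U {ctx.X (ctx.sroot i) (-1)}

/-- the value `ν(α) = ∏_j ν_j^{α^j}` on `α ∈ Q` of the character `ν : Q → ℂ^×` determined by
`ν(α_j) = ν_j = νu j` -/
def charVal (νu : Fin ctx.l → ℂˣ) (α : Fin ctx.l → ℤ) : ℂ :=
  (∏ j, (νu j) ^ (α j) : ℂˣ)

end ADEContext


------------------------------------------------------------------------------
-- Auxiliary development
------------------------------------------------------------------------------

namespace ADEContext

variable (ctx : ADEContext)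

/-- pairing with the `k`-th simple root: `s k v = ⟨α_k, v⟩ = ∑_j m_{kj} v^j` -/
def sk (k : Fin ctx.l) (v : Fin ctx.l → ℤ) : ℤ := ∑ j, ctx.M k j * v j

/-- the bilinear form `u^T M v` -/
def bfm (u v : Fin ctx.l → ℤ) : ℤ := ∑ j, u j * ctx.sk j v

/-- the quadratic form `v^T M v` -/
def qf (v : Fin ctx.l → ℤ) : ℤ := ctx.bfm v v

/-- the height of a vector -/
def htv (v : Fin ctx.l → ℤ) : ℤ := ∑ j, v j

section Combinatorics

variable {ctx}

lemma sk_add (k : Fin ctx.l) (u v : Fin ctx.l → ℤ) :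
    ctx.sk k (u + v) = ctx.sk k u + ctx.sk k v := by
  simp [sk, mul_add, Finset.sum_add_distrib]

lemma sk_sub (k : Fin ctx.l) (u v : Fin ctx.l → ℤ) :
    ctx.sk k (u - v) = ctx.sk k u - ctx.sk k v := by
  simp [sk, mul_sub, Finset.sum_sub_distrib]

lemma sk_single (k j : Fin ctx.l) : ctx.sk k (Pi.single j 1) = ctx.M k j := by
  simp [sk, Pi.single_apply]

lemma M_symm' (k j : Fin ctx.l) : ctx.M k j = ctx.M j k := ctx.M_symm.apply j k

lemma bfm_add_left (u v w : Fin ctx.l → ℤ) :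
    ctx.bfm (u + v) w = ctx.bfm u w + ctx.bfm v w := by
  simp [bfm, add_mul, Finset.sum_add_distrib]

lemma bfm_sub_left (u v w : Fin ctx.l → ℤ) :
    ctx.bfm (u - v) w = ctx.bfm u w - ctx.bfm v w := by
  simp [bfm, sub_mul, Finset.sum_sub_distrib]

lemma bfm_add_right (u v w : Fin ctx.l → ℤ) :
    ctx.bfm u (v + w) = ctx.bfm u v + ctx.bfm u w := by
  simp [bfm, sk_add, mul_add, Finset.sum_add_distrib]

lemma bfm_sub_right (u v w : Fin ctx.l → ℤ) :
    ctx.bfm u (v - w) = ctx.bfm u v - ctx.bfm u w := by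
  have h : ∀ j, ctx.sk j (v - w) = ctx.sk j v - ctx.sk j w := by
    intro j; simp [sk, mul_sub, Finset.sum_sub_distrib]
  simp [bfm, h, mul_sub, Finset.sum_sub_distrib]

lemma bfm_single_left (k : Fin ctx.l) (v : Fin ctx.l → ℤ) :
    ctx.bfm (Pi.single k 1) v = ctx.sk k v := by
  simp [bfm, Pi.single_apply]

lemma bfm_single_right (k : Fin ctx.l) (v : Fin ctx.l → ℤ) :
    ctx.bfm v (Pi.single k 1) = ctx.sk k v := by
  have h : ∀ j, ctx.sk j (Pi.single k 1) = ctx.M j k := fun j => sk_single j k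
  simp only [bfm, h]
  rw [sk]
  refine Finset.sum_congr rfl fun j _ => ?_
  rw [M_symm' k j]; ring

lemma qf_single (k : Fin ctx.l) : ctx.qf (Pi.single k 1) = 2 := by
  rw [qf, bfm_single_left, sk_single, ctx.M_diag]

lemma bfm_self (u : Fin ctx.l → ℤ) : ctx.bfm u u = ctx.qf u := rfl

lemma qf_add_single (u : Fin ctx.l → ℤ) (k : Fin ctx.l) :
    ctx.qf (u + Pi.single k 1) = ctx.qf u + 2 * ctx.sk k u + 2 := by
  simp only [qf, bfm_add_left, bfm_add_right, bfm_single_left, bfm_single_right,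
    sk_add, sk_single, ctx.M_diag]
  ring

lemma qf_sub_single (u : Fin ctx.l → ℤ) (k : Fin ctx.l) :
    ctx.qf (u - Pi.single k 1) = ctx.qf u - 2 * ctx.sk k u + 2 := by
  simp only [qf, bfm_sub_left, bfm_sub_right, bfm_single_left, bfm_single_right,
    sk_sub, sk_single, ctx.M_diag]
  ring

lemma qf_pos {v : Fin ctx.l → ℤ} (hv : v ≠ 0) : 0 < ctx.qf v := by
  have hf : (fun j => (v j : ℝ)) ≠ 0 := by
    intro h
    apply hv
    funext j
    have hj := congrFun h j
    simp only [Pi.zero_apply] at hj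
    exact_mod_cast hj
  have h2 := ctx.M_posdef.dotProduct_mulVec_pos hf
  have h3 : dotProduct (star (fun j => (v j : ℝ)))
      ((ctx.M.map (Int.cast : ℤ → ℝ)).mulVec (fun j => (v j : ℝ))) = ((ctx.qf v : ℤ) : ℝ) := by
    simp only [star_trivial, dotProduct, Matrix.mulVec, Matrix.map_apply, qf, bfm, sk]
    push_cast
    rfl
  rw [h3] at h2
  exact_mod_cast h2

lemma htv_add (u v : Fin ctx.l → ℤ) : ctx.htv (u + v) = ctx.htv u + ctx.htv v := by
  simp [htv, Finset.sum_add_distrib]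

lemma htv_single (k : Fin ctx.l) : ctx.htv (Pi.single k 1) = 1 := by
  simp [htv, Pi.single_apply]

lemma htv_pos {β : Fin ctx.l → ℤ} (hβ : β ∈ ctx.Δ) : 1 ≤ ctx.htv β := by
  have h0 : ∀ j ∈ Finset.univ, (0:ℤ) ≤ β j := fun j _ => ctx.Δ_nonneg β hβ j
  have hnn : 0 ≤ ctx.htv β := Finset.sum_nonneg h0
  rcases eq_or_lt_of_le hnn with h | h
  · exfalso
    apply ctx.Δ_ne_zero β hβ
    funext j
    have := (Finset.sum_eq_zero_iff_of_nonneg h0).1 h.symm j (Finset.mem_univ j)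
    simpa using this
  · omega

lemma decomp {γ : Fin ctx.l → ℤ} (hγ : γ ∈ ctx.Δ) :
    (∃ j, γ = (Pi.single j 1 : Fin ctx.l → ℤ)) ∨
    (∃ δ ∈ ctx.Δ, ∃ m, γ = δ + Pi.single m 1) := by
  by_cases hs : ∀ i : Fin ctx.l, γ ≠ Pi.single i 1
  · right
    obtain ⟨δ, hδ, m, hm⟩ := ctx.Δ_decomp γ hγ hs
    exact ⟨δ, hδ, m, hm⟩
  · left
    push_neg at hs
    exact hs

lemma two_single_not_mem (j : Fin ctx.l) :
    (Pi.single j 1 + Pi.single j 1 : Fin ctx.l → ℤ) ∉ ctx.Δ := fun h =>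
  ((ctx.sum_simple_mem_iff j j).1 h).1 rfl

lemma two_single_add_not_mem' (k j : Fin ctx.l) :
    (Pi.single k 1 + (Pi.single k 1 + Pi.single j 1) : Fin ctx.l → ℤ) ∉ ctx.Δ := by
  have h := ctx.two_simple_add_not_mem k j
  have he : ((2:ℤ) • (Pi.single k 1 : Fin ctx.l → ℤ) + Pi.single j 1)
      = Pi.single k 1 + (Pi.single k 1 + Pi.single j 1) := by
    rw [two_smul]; abel
  rwa [he] at h

/-- x is never zero for a root -/
lemma x_ne_zero {θ : Fin ctx.l → ℤ} (hθ : θ ∈ ctx.Δ) (m : ℤ) : ctx.x θ m ≠ 0 := by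
  rw [← ctx.basis_eq ⟨θ, hθ⟩ m]
  exact ctx.basis.ne_zero _

lemma smul_x_cancel {θ : Fin ctx.l → ℤ} (hθ : θ ∈ ctx.Δ) (m : ℤ) {a b : ℂ}
    (h : a • ctx.x θ m = b • ctx.x θ m) : a = b := by
  have h2 : (a - b) • ctx.x θ m = 0 := by rw [sub_smul, h, sub_self]
  rcases smul_eq_zero.1 h2 with h3 | h3
  · exact sub_eq_zero.1 h3
  · exact absurd h3 (x_ne_zero hθ m)

/-- bracket of two root vectors whose sum is a root -/
lemma br {α β θ : Fin ctx.l → ℤ} (hα : α ∈ ctx.Δ) (hβ : β ∈ ctx.Δ)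
    (hθeq : α + β = θ) (hθ : θ ∈ ctx.Δ) (m n : ℤ) :
    ⁅ctx.x α m, ctx.x β n⁆ = ctx.C α β • ctx.x θ (m + n) := by
  rw [ctx.bracket_x α hα β hβ m n, if_pos (by rw [hθeq]; exact hθ), hθeq]

/-- bracket of two root vectors whose sum is not a root -/
lemma br0 {α β : Fin ctx.l → ℤ} (hα : α ∈ ctx.Δ) (hβ : β ∈ ctx.Δ)
    (h : α + β ∉ ctx.Δ) (m n : ℤ) : ⁅ctx.x α m, ctx.x β n⁆ = 0 := by
  rw [ctx.bracket_x α hα β hβ m n, if_neg h]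

lemma br00 {α β θ : Fin ctx.l → ℤ} (hα : α ∈ ctx.Δ) (hβ : β ∈ ctx.Δ)
    (hθeq : α + β = θ) (hθ : θ ∈ ctx.Δ) :
    ⁅ctx.x α 0, ctx.x β 0⁆ = ctx.C α β • ctx.x θ 0 := by
  rw [br hα hβ hθeq hθ 0 0]
  norm_num

lemma Cskew {α β θ : Fin ctx.l → ℤ} (hα : α ∈ ctx.Δ) (hβ : β ∈ ctx.Δ)
    (hθeq : α + β = θ) (hθ : θ ∈ ctx.Δ) : ctx.C β α = -ctx.C α β := by
  have h1 : ⁅ctx.x β 0, ctx.x α 0⁆ = ctx.C β α • ctx.x θ 0 :=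
    br00 hβ hα (by rw [add_comm]; exact hθeq) hθ
  have h2 : ⁅ctx.x α 0, ctx.x β 0⁆ = ctx.C α β • ctx.x θ 0 := br00 hα hβ hθeq hθ
  have h3 : ⁅ctx.x β 0, ctx.x α 0⁆ = -⁅ctx.x α 0, ctx.x β 0⁆ := (lie_skew _ _).symm
  rw [h1, h2, ← neg_smul] at h3
  exact smul_x_cancel hθ 0 h3

/-- Jacobi vanishing pattern: if `a+b ∉ Δ`, `a+ρ ∉ Δ`, `b+ρ = γ ∈ Δ`, then `a+γ ∉ Δ`. -/
lemma jacV2 {a b ρ γ β : Fin ctx.l → ℤ} (ha : a ∈ ctx.Δ) (hb : b ∈ ctx.Δ)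
    (hρ : ρ ∈ ctx.Δ) (hab : a + b ∉ ctx.Δ) (haρ : a + ρ ∉ ctx.Δ)
    (hγeq : b + ρ = γ) (hγ : γ ∈ ctx.Δ) (hβeq : a + γ = β) : β ∉ ctx.Δ := by
  intro hβ
  have h1 : ⁅ctx.x a 0, ⁅ctx.x b 0, ctx.x ρ 0⁆⁆ = (ctx.C b ρ * ctx.C a γ) • ctx.x β 0 := by
    rw [br00 hb hρ hγeq hγ, lie_smul, br00 ha hγ hβeq hβ, smul_smul]
  have h2 : ⁅ctx.x a 0, ⁅ctx.x b 0, ctx.x ρ 0⁆⁆ = 0 := by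
    rw [leibniz_lie, br0 ha hb hab 0 0, br0 ha hρ haρ 0 0, zero_lie, lie_zero, add_zero]
  rw [h2] at h1
  have h3 : ctx.C b ρ * ctx.C a γ = 0 := by
    have := smul_x_cancel hβ 0 (a := (0:ℂ)) (b := ctx.C b ρ * ctx.C a γ)
      (by rw [← h1, zero_smul])
    exact this.symm
  rcases mul_eq_zero.1 h3 with h | h
  · exact ctx.C_ne_zero b hb ρ hρ (by rw [hγeq]; exact hγ) h
  · exact ctx.C_ne_zero a ha γ hγ (by rw [hβeq]; exact hβ) h

/-- no `α_k`-string of length 2 through a decomposable root, when `ρ + α_k ∉ Δ`. -/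
lemma jacNS {k r : Fin ctx.l} {ρ δ γ β : Fin ctx.l → ℤ} (hρ : ρ ∈ ctx.Δ)
    (hδeq : Pi.single r 1 + ρ = δ) (hδ : δ ∈ ctx.Δ)
    (hγeq : Pi.single k 1 + δ = γ) (hγ : γ ∈ ctx.Δ)
    (hkρ : Pi.single k 1 + ρ ∉ ctx.Δ)
    (hβeq : Pi.single k 1 + γ = β) : β ∉ ctx.Δ := by
  intro hβ
  have hk : (Pi.single k 1 : Fin ctx.l → ℤ) ∈ ctx.Δ := ctx.simple_mem k
  have hr : (Pi.single r 1 : Fin ctx.l → ℤ) ∈ ctx.Δ := ctx.simple_mem r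
  set xk := ctx.x (Pi.single k 1) 0
  set xr := ctx.x (Pi.single r 1) 0
  set xρ := ctx.x ρ 0
  have h1 : ⁅xk, ⁅xk, ⁅xr, xρ⁆⁆⁆ = (ctx.C (Pi.single r 1) ρ * ctx.C (Pi.single k 1) δ *
      ctx.C (Pi.single k 1) γ) • ctx.x β 0 := by
    rw [br00 hr hρ hδeq hδ, lie_smul, br00 hk hδ hγeq hγ, lie_smul, lie_smul,
      br00 hk hγ hβeq hβ, smul_smul, smul_smul]
  have hinner : ⁅xk, ⁅xr, xρ⁆⁆ = ⁅⁅xk, xr⁆, xρ⁆ := by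
    rw [leibniz_lie, br0 hk hρ hkρ 0 0, lie_zero, add_zero]
  have h2 : ⁅xk, ⁅xk, ⁅xr, xρ⁆⁆⁆ = 0 := by
    rw [hinner]
    by_cases hkr : (Pi.single k 1 + Pi.single r 1 : Fin ctx.l → ℤ) ∈ ctx.Δ
    · rw [br00 hk hr rfl hkr, smul_lie, lie_smul, leibniz_lie,
        br0 hk hkr (two_single_add_not_mem' k r) 0 0, zero_lie,
        br0 hk hρ hkρ 0 0, lie_zero, add_zero, smul_zero]
    · rw [br0 hk hr hkr 0 0, zero_lie, lie_zero]
  rw [h2] at h1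
  have h3 := (smul_x_cancel hβ 0 (a := (0:ℂ)) (b := _) (by rw [← h1, zero_smul])).symm
  have c1 : ctx.C (Pi.single r 1) ρ ≠ 0 := ctx.C_ne_zero _ hr ρ hρ (by rw [hδeq]; exact hδ)
  have c2 : ctx.C (Pi.single k 1) δ ≠ 0 := ctx.C_ne_zero _ hk δ hδ (by rw [hγeq]; exact hγ)
  have c3 : ctx.C (Pi.single k 1) γ ≠ 0 := ctx.C_ne_zero _ hk γ hγ (by rw [hβeq]; exact hβ)
  exact (mul_ne_zero (mul_ne_zero c1 c2) c3) h3

/-- the three-Jacobi-identities contradiction killing the "interrupted string" configuration. -/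
lemma jacTrio {k m : Fin ctx.l} {ρ δ γ β ε : Fin ctx.l → ℤ}
    (hρ : ρ ∈ ctx.Δ) (hδ : δ ∈ ctx.Δ) (hγ : γ ∈ ctx.Δ) (hβ : β ∈ ctx.Δ) (hε : ε ∈ ctx.Δ)
    (hδeq : Pi.single k 1 + ρ = δ) (hγeq : Pi.single m 1 + δ = γ)
    (hβeq : Pi.single k 1 + γ = β) (hεeq : Pi.single k 1 + Pi.single m 1 = ε)
    (hδk : Pi.single k 1 + δ ∉ ctx.Δ) (hρm : Pi.single m 1 + ρ ∉ ctx.Δ) : False := by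
  have hk : (Pi.single k 1 : Fin ctx.l → ℤ) ∈ ctx.Δ := ctx.simple_mem k
  have hm : (Pi.single m 1 : Fin ctx.l → ℤ) ∈ ctx.Δ := ctx.simple_mem m
  have hερ : ε + ρ = γ := by rw [← hεeq, ← hγeq, ← hδeq]; abel
  have hεδ : ε + δ = β := by rw [← hεeq, ← hβeq, ← hγeq]; abel
  have hεmk : Pi.single m 1 + Pi.single k 1 = ε := by rw [← hεeq]; abel
  -- notation for the six structure constants
  set a : ℂ := ctx.C (Pi.single k 1) (Pi.single m 1) with ha_def
  set a' : ℂ := ctx.C (Pi.single m 1) (Pi.single k 1) with ha'_def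
  set p : ℂ := ctx.C ε ρ with hp_def
  set d : ℂ := ctx.C ε δ with hd_def
  set r : ℂ := ctx.C (Pi.single k 1) ρ with hr_def
  set s : ℂ := ctx.C (Pi.single m 1) δ with hs_def
  set g : ℂ := ctx.C (Pi.single k 1) γ with hg_def
  have hskew : a' = -a := Cskew hk hm hεeq hε
  have hrne : r ≠ 0 := ctx.C_ne_zero _ hk ρ hρ (by rw [hδeq]; exact hδ)
  have hsne : s ≠ 0 := ctx.C_ne_zero _ hm δ hδ (by rw [hγeq]; exact hγ)
  have hgne : g ≠ 0 := ctx.C_ne_zero _ hk γ hγ (by rw [hβeq]; exact hβ)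
  have hane : a ≠ 0 := ctx.C_ne_zero _ hk _ hm (by rw [hεeq]; exact hε)
  -- Eq A : p * g = r * d
  have eqA : p * g = r * d := by
    have lhs : ⁅ctx.x (Pi.single k 1) 0, ⁅ctx.x ε 0, ctx.x ρ 0⁆⁆ = (p * g) • ctx.x β 0 := by
      rw [br00 hε hρ hερ hγ, lie_smul, br00 hk hγ hβeq hβ, smul_smul]
    have rhs : ⁅ctx.x (Pi.single k 1) 0, ⁅ctx.x ε 0, ctx.x ρ 0⁆⁆ = (r * d) • ctx.x β 0 := by
      rw [leibniz_lie,
        br0 hk hε (by rw [← hεeq]; exact two_single_add_not_mem' k m) 0 0, zero_lie,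
        br00 hk hρ hδeq hδ, lie_smul, br00 hε hδ hεδ hβ, smul_smul, zero_add]
    rw [lhs] at rhs
    exact smul_x_cancel hβ 0 rhs
  -- Eq B : 0 = a' * d + s * g
  have eqB : (0:ℂ) = a' * d + s * g := by
    have lhs : ⁅ctx.x (Pi.single m 1) 0, ⁅ctx.x (Pi.single k 1) 0, ctx.x δ 0⁆⁆
        = (0:ℂ) • ctx.x β 0 := by
      rw [br0 hk hδ hδk 0 0, lie_zero, zero_smul]
    have rhs : ⁅ctx.x (Pi.single m 1) 0, ⁅ctx.x (Pi.single k 1) 0, ctx.x δ 0⁆⁆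
        = (a' * d + s * g) • ctx.x β 0 := by
      rw [leibniz_lie, br00 hm hk hεmk hε, smul_lie, br00 hε hδ hεδ hβ,
        br00 hm hδ hγeq hγ, lie_smul, br00 hk hγ hβeq hβ,
        smul_smul, smul_smul, add_smul]
    rw [lhs] at rhs
    exact smul_x_cancel hβ 0 rhs
  -- Eq C : 0 = a * p + r * s
  have eqC : (0:ℂ) = a * p + r * s := by
    have lhs : ⁅ctx.x (Pi.single k 1) 0, ⁅ctx.x (Pi.single m 1) 0, ctx.x ρ 0⁆⁆
        = (0:ℂ) • ctx.x γ 0 := by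
      rw [br0 hm hρ hρm 0 0, lie_zero, zero_smul]
    have rhs : ⁅ctx.x (Pi.single k 1) 0, ⁅ctx.x (Pi.single m 1) 0, ctx.x ρ 0⁆⁆
        = (a * p + r * s) • ctx.x γ 0 := by
      rw [leibniz_lie, br00 hk hm hεeq hε, smul_lie, br00 hε hρ hερ hγ,
        br00 hk hρ hδeq hδ, lie_smul, br00 hm hδ hγeq hγ,
        smul_smul, smul_smul, add_smul]
    rw [lhs] at rhs
    exact smul_x_cancel hγ 0 rhs
  -- combine
  have key : (2:ℂ) * (r * s * g) = 0 := by
    have h1 : a * p = -(r * s) := by linear_combination -eqC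
    have h2 : a * d = s * g := by
      rw [hskew] at eqB
      linear_combination eqB
    have h3 : a * (p * g) = a * (r * d) := by rw [eqA]
    calc (2:ℂ) * (r * s * g) = r * (s * g) + (r * s) * g := by ring
    _ = r * (a * d) + (r*s)*g := by rw [h2]
    _ = a * (r * d) + (r*s)*g := by ring
    _ = a * (p * g) + (r*s)*g := by rw [h3]
    _ = (a * p) * g + (r*s)*g := by ring
    _ = (-(r*s)) * g + (r*s)*g := by rw [h1]
    _ = 0 := by ring
  have : r * s * g ≠ 0 := mul_ne_zero (mul_ne_zero hrne hsne) hgne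
  have h2 : (2:ℂ) ≠ 0 := two_ne_zero
  exact (mul_ne_zero h2 this) key

/-- the master statement `⟨α_k, γ⟩ = -1` whenever `γ, γ+α_k ∈ Δ`, for heights `≤ n`. -/
def Pn (n : ℕ) : Prop := ∀ γ ∈ ctx.Δ, ctx.htv γ ≤ (n:ℤ) → ∀ k : Fin ctx.l,
  γ + Pi.single k 1 ∈ ctx.Δ → ctx.sk k γ = -1

variable (ctx)

lemma Pn_zero : ctx.Pn 0 := by
  intro γ hγ hht k _
  exact absurd (htv_pos hγ) (by push_cast at hht ⊢; omega)

variable {ctx}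

/-- norms: all roots of height `≤ n+1` have `q = 2`, given `Pn n`. -/
lemma Q_of_P {n : ℕ} (hP : ctx.Pn n) :
    ∀ mm : ℕ, mm ≤ n + 1 → ∀ δ ∈ ctx.Δ, ctx.htv δ ≤ (mm:ℤ) → ctx.qf δ = 2 := by
  intro mm
  induction mm with
  | zero =>
    intro _ δ hδ hht
    exact absurd (htv_pos hδ) (by push_cast at hht ⊢; omega)
  | succ m ih =>
    intro hmn δ hδ hht
    rcases decomp hδ with ⟨j, rfl⟩ | ⟨δ', hδ', r, rfl⟩
    · exact qf_single j
    · have hht' : ctx.htv δ' ≤ (m:ℤ) := by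
        have := htv_add (ctx := ctx) δ' (Pi.single r 1)
        rw [htv_single] at this
        push_cast at hht ⊢
        omega
      have hsr : ctx.sk r δ' = -1 := hP δ' hδ' (by
          have hmn' : (m:ℤ) ≤ (n:ℤ) := by omega
          omega) r hδ
      rw [qf_add_single, ih (by omega) δ' hδ' hht', hsr]
      ring

/-- `F`: if `⟨α_k, δ⟩ = 1` and `δ ≠ α_k` then `δ - α_k ∈ Δ`, for heights `≤ n+1`. -/
lemma F_of_P {n : ℕ} (hP : ctx.Pn n) :
    ∀ mm : ℕ, mm ≤ n + 1 → ∀ δ ∈ ctx.Δ, ctx.htv δ ≤ (mm:ℤ) → ∀ k : Fin ctx.l,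
      δ ≠ Pi.single k 1 → ctx.sk k δ = 1 → δ - Pi.single k 1 ∈ ctx.Δ := by
  intro mm
  induction mm with
  | zero =>
    intro _ δ hδ hht
    exact absurd (htv_pos hδ) (by push_cast at hht ⊢; omega)
  | succ m ih =>
    intro hmn δ hδ hht k hδk hsk
    rcases decomp hδ with ⟨j, rfl⟩ | ⟨δ', hδ', r, rfl⟩
    · -- simple: impossible
      exfalso
      have hjk : j ≠ k := fun h => hδk (by rw [h])
      rw [sk_single] at hsk
      rcases ctx.M_offdiag k j (Ne.symm hjk) with h | h <;> omega
    · have hht' : ctx.htv δ' ≤ (m:ℤ) := by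
        have := htv_add (ctx := ctx) δ' (Pi.single r 1)
        rw [htv_single] at this
        push_cast at hht ⊢
        omega
      by_cases hrk : r = k
      · subst hrk
        have : δ' + Pi.single r 1 - Pi.single r 1 = δ' := by abel
        rw [this]
        exact hδ'
      · have hskδ' : ctx.sk k δ' + ctx.M k r = 1 := by
          rw [sk_add, sk_single] at hsk
          omega
        rcases ctx.M_offdiag k r (fun h => hrk h.symm) with h | h
        · -- M k r = 0
          have hs1 : ctx.sk k δ' = 1 := by omega
          have hδ'k : δ' ≠ Pi.single k 1 := by
            intro hh
            rw [hh, sk_single, ctx.M_diag] at hs1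
            omega
          have hδ'' := ih (by omega) δ' hδ' hht' k hδ'k hs1
          set δ'' := δ' - Pi.single k 1 with hδ''_def
          have hδ'eq : Pi.single k 1 + δ'' = δ' := by rw [hδ''_def]; abel
          -- Jacobi: δ'' + α_r ∈ Δ
          have hmem : Pi.single r 1 + δ'' ∈ ctx.Δ := by
            by_contra hnot
            have hrkmem : (Pi.single r 1 + Pi.single k 1 : Fin ctx.l → ℤ) ∉ ctx.Δ := by
              intro hmem2
              have := ((ctx.sum_simple_mem_iff r k).1 hmem2).2
              rw [M_symm' r k] at this
              omega
            exact jacV2 (ctx.simple_mem r) (ctx.simple_mem k) hδ'' hrkmem hnot hδ'eq hδ'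
              (by abel) hδ
          have : δ' + Pi.single r 1 - Pi.single k 1 = Pi.single r 1 + δ'' := by
            rw [hδ''_def]; abel
          rw [this]
          exact hmem
        · -- M k r = -1, so sk k δ' = 2, forcing δ' = single k
          have hs2 : ctx.sk k δ' = 2 := by omega
          have hq : ctx.qf δ' = 2 := Q_of_P hP m (by omega) δ' hδ' hht'
          have hzero : ctx.qf (δ' - Pi.single k 1) = 0 := by
            rw [qf_sub_single, hq, hs2]; ring
          have hδ'k : δ' = Pi.single k 1 := by
            by_contra hne
            have := qf_pos (ctx := ctx) (sub_ne_zero.2 hne)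
            omega
          have : δ' + Pi.single r 1 - Pi.single k 1 = Pi.single r 1 := by
            rw [hδ'k]; abel
          rw [this]
          exact ctx.simple_mem r

/-- the inductive step for the master lemma. -/
lemma Pn_succ {n : ℕ} (hP : ctx.Pn n) : ctx.Pn (n+1) := by
  intro γ hγ hht k hβmem
  have hγk : γ ≠ Pi.single k 1 := by
    rintro rfl
    exact two_single_not_mem k hβmem
  rcases decomp hγ with ⟨j, rfl⟩ | ⟨δ, hδ, m, rfl⟩
  · -- simple root
    have h := (ctx.sum_simple_mem_iff j k).1 hβmem
    rw [sk_single, M_symm' k j]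
    exact h.2
  · -- γ = δ + α_m
    have hhδ : ctx.htv δ ≤ (n:ℤ) := by
      have h1 := htv_add (ctx := ctx) δ (Pi.single m 1)
      rw [htv_single] at h1
      push_cast at hht ⊢
      omega
    have hδm : δ ≠ Pi.single m 1 := by
      rintro rfl
      exact two_single_not_mem m hγ
    have hsmδ : ctx.sk m δ = -1 := hP δ hδ hhδ m hγ
    by_cases hmk : m = k
    · -- the string case : γ = δ + α_k, γ + α_k ∈ Δ : contradiction
      subst hmk
      exfalso
      rcases decomp hδ with ⟨j, rfl⟩ | ⟨ρ, hρ, r, rfl⟩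
      · -- δ simple
        have hjm : j ≠ m := fun h => hδm (by rw [h])
        exact two_single_add_not_mem' m j (by
          have : (Pi.single m 1 + (Pi.single m 1 + Pi.single j 1) : Fin ctx.l → ℤ)
              = Pi.single j 1 + Pi.single m 1 + Pi.single m 1 := by abel
          rw [this]
          exact hβmem)
      · -- δ = ρ + α_r
        have hhρ : ctx.htv ρ ≤ (n:ℤ) := by
          have h1 := htv_add (ctx := ctx) ρ (Pi.single r 1)
          rw [htv_single] at h1
          have := htv_pos hρ
          omega
        by_cases hrm : r = m
        · subst hrm
          have h1 : ctx.sk r ρ = -1 := hP ρ hρ hhρ r hδ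
          have h2 : ctx.sk r (ρ + Pi.single r 1) = -1 := hP _ hδ hhδ r hγ
          rw [sk_add, sk_single, ctx.M_diag, h1] at h2
          omega
        · by_cases hρm : ρ + Pi.single m 1 ∈ ctx.Δ
          · -- σ := ρ + α_m ∈ Δ
            set σ := ρ + Pi.single m 1 with hσ_def
            have hhσ : ctx.htv σ ≤ (n:ℤ) := by
              rw [hσ_def, htv_add, htv_single]
              have h1 := htv_add (ctx := ctx) ρ (Pi.single r 1)
              rw [htv_single] at h1
              omega
            have h1 : ctx.sk m ρ = -1 := hP ρ hρ hhρ m hρm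
            have h2 : ctx.sk m (ρ + Pi.single r 1) = -1 := hP _ hδ hhδ m hγ
            have hMmr : ctx.M m r = 0 := by
              rw [sk_add, sk_single, h1] at h2
              omega
            have hσm : σ + Pi.single m 1 ∉ ctx.Δ := by
              intro hmem
              have := hP σ hρm hhσ m hmem
              rw [hσ_def, sk_add, sk_single, ctx.M_diag, h1] at this
              omega
            have hmr : (Pi.single m 1 + Pi.single r 1 : Fin ctx.l → ℤ) ∉ ctx.Δ := by
              intro hmem
              have := ((ctx.sum_simple_mem_iff m r).1 hmem).2
              omega
            exact jacV2 (ctx.simple_mem m) (ctx.simple_mem r) hρm hmr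
              (by rw [hσ_def]; rw [show (Pi.single m 1 + (ρ + Pi.single m 1) : Fin ctx.l → ℤ)
                    = ρ + Pi.single m 1 + Pi.single m 1 from by abel] ; exact hσm)
              (by rw [hσ_def]; abel : Pi.single r 1 + σ = ρ + Pi.single r 1 + Pi.single m 1)
              hγ (by abel) hβmem
          · -- ρ + α_m ∉ Δ : jacNS kills the string
            exact jacNS hρ (by abel : Pi.single r 1 + ρ = ρ + Pi.single r 1) hδ
              (by abel : Pi.single m 1 + (ρ + Pi.single r 1) = ρ + Pi.single r 1 + Pi.single m 1)
              hγ
              (by rw [show (Pi.single m 1 + ρ : Fin ctx.l → ℤ) = ρ + Pi.single m 1 from by abel]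
                  exact hρm)
              (by abel) hβmem
    · -- m ≠ k
      have hkm : k ≠ m := fun h => hmk h.symm
      by_cases hδk : δ = Pi.single k 1
      · -- γ = α_k + α_m, β = 2α_k + α_m ∉ Δ
        exfalso
        subst hδk
        exact two_single_add_not_mem' k m (by
          rw [show (Pi.single k 1 + (Pi.single k 1 + Pi.single m 1) : Fin ctx.l → ℤ)
              = Pi.single k 1 + Pi.single m 1 + Pi.single k 1 from by abel]
          exact hβmem)
      · have hqδ : ctx.qf δ = 2 := Q_of_P hP (n+1) le_rfl δ hδ (by push_cast; omega)
        have hqγ : ctx.qf (δ + Pi.single m 1) = 2 := by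
          rw [qf_add_single, hqδ, hsmδ]; ring
        have hγne : (δ + Pi.single m 1 : Fin ctx.l → ℤ) ≠ 0 := ctx.Δ_ne_zero _ hγ
        have hβne : (δ + Pi.single m 1 + Pi.single k 1 : Fin ctx.l → ℤ) ≠ 0 :=
          ctx.Δ_ne_zero _ hβmem
        have hqβpos : 0 < ctx.qf (δ + Pi.single m 1 + Pi.single k 1) := qf_pos hβne
        have hqβ : ctx.qf (δ + Pi.single m 1 + Pi.single k 1)
            = 4 + 2 * (ctx.sk k δ + ctx.M k m) := by
          rw [qf_add_single, hqγ, sk_add, sk_single]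
          ring
        rw [sk_add, sk_single]
        by_cases hδek : δ + Pi.single k 1 ∈ ctx.Δ
        · -- parallelogram/posdef
          have hskδ : ctx.sk k δ = -1 := hP δ hδ hhδ k hδek
          rcases ctx.M_offdiag k m hkm with h | h
          · rw [hskδ, h]; norm_num
          · exfalso
            rw [hskδ, h] at hqβ
            omega
        · rcases ctx.M_offdiag k m hkm with h | h
          · -- M k m = 0 : Jacobi V2 contradiction
            exfalso
            have hkm' : (Pi.single k 1 + Pi.single m 1 : Fin ctx.l → ℤ) ∉ ctx.Δ := by
              intro hmem
              have := ((ctx.sum_simple_mem_iff k m).1 hmem).2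
              omega
            exact jacV2 (ctx.simple_mem k) (ctx.simple_mem m) hδ hkm'
              (by rw [show (Pi.single k 1 + δ : Fin ctx.l → ℤ) = δ + Pi.single k 1 from by abel]
                  exact hδek)
              (by abel : Pi.single m 1 + δ = δ + Pi.single m 1) hγ (by abel) hβmem
          · -- M k m = -1
            rw [h]
            -- need : sk k δ = 0
            have hup : ctx.sk k δ ≤ 1 := by
              by_contra hgt
              push_neg at hgt
              have hzero : ctx.qf (δ - Pi.single k 1) ≤ 0 := by
                rw [qf_sub_single, hqδ]
                omega
              have := qf_pos (ctx := ctx) (sub_ne_zero.2 hδk)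
              omega
            have hlow : 0 ≤ ctx.sk k δ := by
              rw [h] at hqβ
              omega
            rcases (by omega : ctx.sk k δ = 0 ∨ ctx.sk k δ = 1) with h0 | h1
            · omega
            · -- sk k δ = 1 : the hard configuration, killed by jacTrio
              exfalso
              have hρmem : δ - Pi.single k 1 ∈ ctx.Δ :=
                F_of_P hP (n+1) le_rfl δ hδ (by push_cast; omega) k hδk h1
              set ρ := δ - Pi.single k 1 with hρ_def
              have hδeq : Pi.single k 1 + ρ = δ := by rw [hρ_def]; abel
              have hhρ : ctx.htv ρ ≤ (n:ℤ) := by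
                rw [hρ_def]
                have h1' := htv_add (ctx := ctx) δ (-(Pi.single k 1))
                have h2' : ctx.htv (δ - Pi.single k 1) = ctx.htv δ - 1 := by
                  rw [sub_eq_add_neg, htv_add]
                  have : ctx.htv (-(Pi.single k 1) : Fin ctx.l → ℤ)
                      = -(ctx.htv (Pi.single k 1)) := by
                    simp [htv, Finset.sum_neg_distrib]
                  rw [this, htv_single]
                  ring
                rw [h2']
                omega
              have hskρ : ctx.sk k ρ = -1 := hP ρ hρmem hhρ k (by
                rw [show ρ + Pi.single k 1 = δ from by rw [hρ_def]; abel]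
                exact hδ)
              have hρm2 : ρ + Pi.single m 1 ∉ ctx.Δ := by
                intro hmem
                have hsmρ : ctx.sk m ρ = -1 := hP ρ hρmem hhρ m hmem
                have hqρ : ctx.qf ρ = 2 := Q_of_P hP (n+1) le_rfl ρ hρmem
                  (by push_cast; omega)
                have : ctx.qf (δ + Pi.single m 1) = 0 := by
                  have hexp : (δ + Pi.single m 1 : Fin ctx.l → ℤ)
                      = (ρ + Pi.single k 1) + Pi.single m 1 := by rw [hρ_def]; abel
                  rw [hexp, qf_add_single, qf_add_single, hqρ, hskρ, sk_add, hsmρ, sk_single,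
                    M_symm' m k, h]
                  ring
                omega
              have hε : (Pi.single k 1 + Pi.single m 1 : Fin ctx.l → ℤ) ∈ ctx.Δ :=
                (ctx.sum_simple_mem_iff k m).2 ⟨hkm, h⟩
              exact jacTrio hρmem hδ hγ hβmem hε hδeq
                (by abel : Pi.single m 1 + δ = δ + Pi.single m 1)
                (by abel : Pi.single k 1 + (δ + Pi.single m 1)
                    = δ + Pi.single m 1 + Pi.single k 1) rfl
                (by rw [show (Pi.single k 1 + δ : Fin ctx.l → ℤ) = δ + Pi.single k 1 from by abel]
                    exact hδek)
                (by rw [show (Pi.single m 1 + ρ : Fin ctx.l → ℤ) = ρ + Pi.single m 1 from by abel]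
                    exact hρm2)

lemma Pn_all : ∀ n : ℕ, ctx.Pn n := by
  intro n
  induction n with
  | zero => exact ctx.Pn_zero
  | succ n ih => exact Pn_succ ih

/-- THE key root-pairing fact: `⟨α_k, γ⟩ = -1` whenever `γ` and `γ + α_k` are roots. -/
lemma C_full {γ : Fin ctx.l → ℤ} (hγ : γ ∈ ctx.Δ) (k : Fin ctx.l)
    (hmem : γ + Pi.single k 1 ∈ ctx.Δ) : ctx.sk k γ = -1 := by
  have hnn : (0:ℤ) ≤ ctx.htv γ := le_of_lt (by have := htv_pos hγ; omega)
  exact Pn_all (ctx.htv γ).toNat γ hγ (by rw [Int.toNat_of_nonneg hnn]) k hmem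

/-- the inequality `⟨α_i, β⟩ ≤ β^i` for roots `β ≠ α_i`. -/
lemma A_ineq {β : Fin ctx.l → ℤ} (hβ : β ∈ ctx.Δ) (i : Fin ctx.l)
    (hne : β ≠ Pi.single i 1) : ctx.sk i β ≤ β i := by
  have haux : ∀ nn : ℕ, ∀ β ∈ ctx.Δ, ctx.htv β ≤ (nn:ℤ) → ∀ i : Fin ctx.l,
      β ≠ Pi.single i 1 → ctx.sk i β ≤ β i := by
    intro nn
    induction nn with
    | zero =>
      intro β hβ hht
      exact absurd (htv_pos hβ) (by push_cast at hht ⊢; omega)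
    | succ nn ih =>
      intro β hβ hht i hne
      rcases decomp hβ with ⟨j, rfl⟩ | ⟨δ, hδ, m, rfl⟩
      · have hji : j ≠ i := fun h => hne (by rw [h])
        rw [sk_single, Pi.single_apply, if_neg (fun h : i = j => hji h.symm)]
        rcases ctx.M_offdiag i j (fun h => hji h.symm) with h | h <;> omega
      · have hhδ : ctx.htv δ ≤ (nn:ℤ) := by
          have h1 := htv_add (ctx := ctx) δ (Pi.single m 1)
          rw [htv_single] at h1
          push_cast at hht ⊢
          omega
        by_cases hδi : δ = Pi.single i 1
        · subst hδi
          have hmi : m ≠ i := by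
            rintro rfl
            exact two_single_not_mem m hβ
          have hMim : ctx.M i m = -1 := by
            have := (ctx.sum_simple_mem_iff i m).1 hβ
            exact this.2
          rw [sk_add, sk_single, sk_single, ctx.M_diag, hMim, Pi.add_apply,
            Pi.single_eq_same, Pi.single_apply, if_neg (fun h : i = m => hmi h.symm)]
          omega
        · by_cases hmi : m = i
          · have hβ' : δ + Pi.single i 1 ∈ ctx.Δ := by rw [← hmi]; exact hβ
            have hski : ctx.sk i δ = -1 := C_full hδ i hβ'
            rw [hmi, sk_add, sk_single, ctx.M_diag, hski, Pi.add_apply, Pi.single_eq_same]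
            have := ctx.Δ_nonneg δ hδ i
            omega
          · have hih := ih δ hδ hhδ i hδi
            rw [sk_add, sk_single, Pi.add_apply, Pi.single_apply,
              if_neg (fun h : i = m => hmi h.symm)]
            rcases ctx.M_offdiag i m (fun h => hmi h.symm) with h | h <;> omega
  have hnn : (0:ℤ) ≤ ctx.htv β := le_of_lt (by have := htv_pos hβ; omega)
  exact haux (ctx.htv β).toNat β hβ (by rw [Int.toNat_of_nonneg hnn]) i hne

end Combinatorics

------------------------------------------------------------------------------
-- the enveloping-algebra part
------------------------------------------------------------------------------

section Enveloping

variable {ctx}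

attribute [local instance] LieRing.ofAssociativeRing

lemma X_comm (v w : ctx.nbar) :
    (UniversalEnvelopingAlgebra.ι ℂ v : ctx.U) * UniversalEnvelopingAlgebra.ι ℂ w
      = UniversalEnvelopingAlgebra.ι ℂ w * UniversalEnvelopingAlgebra.ι ℂ v
        + UniversalEnvelopingAlgebra.ι ℂ ⁅v, w⁆ := by
  have h := (UniversalEnvelopingAlgebra.ι (R := ℂ) (L := ctx.nbar)).map_lie (x := v) (y := w)
  rw [Ring.lie_def] at h
  rw [h]
  rw [add_comm, sub_add_cancel]

lemma X_mem_Uplus {α : Fin ctx.l → ℤ} (hα : α ∈ ctx.Δ) {m : ℤ} (hm : 0 ≤ m) :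
    ctx.X α m ∈ ctx.Uplus :=
  Submodule.subset_span ⟨α, hα, m, hm, rfl⟩

lemma csmul_mem_Uplus (c : ℂ) {u : ctx.U} (hu : u ∈ ctx.Uplus) : c • u ∈ ctx.Uplus := by
  rw [Algebra.smul_def, ← smul_eq_mul]
  exact ctx.Uplus.smul_mem _ hu

lemma mul_mem_Uplus (a : ctx.U) {u : ctx.U} (hu : u ∈ ctx.Uplus) : a * u ∈ ctx.Uplus := by
  have := ctx.Uplus.smul_mem a hu
  rwa [smul_eq_mul] at this

lemma Uplus_le_I0 : ctx.Uplus ≤ ctx.I0 := le_sup_right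

lemma Jideal_le_I0 : ctx.Jideal ≤ ctx.I0 := le_sup_left

lemma R_two_eq (i : Fin ctx.l) :
    ctx.R i 2 = ctx.X (ctx.sroot i) (-1) * ctx.X (ctx.sroot i) (-1) := by
  rw [R]
  have h1 : (1 - 2 : ℤ) = -1 := by norm_num
  rw [h1, Finset.Icc_self, Finset.sum_singleton]
  norm_num

/-- the key per-generator membership -/
lemma gen_key (i : Fin ctx.l) {β : Fin ctx.l → ℤ} (hβ : β ∈ ctx.Δ) {m : ℤ} (hm : 0 ≤ m) :
    ctx.X β (m - (ctx.sk i β - β i)) * ctx.X (ctx.sroot i) (-1) ∈ ctx.I0 := by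
  have hsimp : (ctx.sroot i : Fin ctx.l → ℤ) = Pi.single i 1 := rfl
  have hsri : (ctx.sroot i : Fin ctx.l → ℤ) ∈ ctx.Δ := ctx.simple_mem i
  by_cases hβi : β = ctx.sroot i
  · subst hβi
    have hsv : ctx.sk i (ctx.sroot i) = 2 := by
      rw [hsimp, sk_single, ctx.M_diag]
    have hiv : (ctx.sroot i : Fin ctx.l → ℤ) i = 1 := by
      rw [hsimp, Pi.single_eq_same]
    rw [hsv, hiv]
    rcases eq_or_lt_of_le hm with hm0 | hmpos
    · -- m = 0 : this is the relation R i 2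
      rw [← hm0]
      norm_num
      have : ctx.X (ctx.sroot i) (-1) * ctx.X (ctx.sroot i) (-1) ∈ ctx.Jideal :=
        Submodule.subset_span ⟨i, 2, le_refl 2, (R_two_eq i).symm⟩
      exact Jideal_le_I0 this
    · -- m ≥ 1 : commute
      have hbr : ⁅ctx.x (ctx.sroot i) (m - (2-1)), ctx.x (ctx.sroot i) (-1)⁆ = 0 :=
        br0 hsri hsri (by rw [hsimp]; exact two_single_not_mem i) _ _
      rw [show ctx.X (ctx.sroot i) (m - (2-1)) * ctx.X (ctx.sroot i) (-1)
          = ctx.X (ctx.sroot i) (-1) * ctx.X (ctx.sroot i) (m - (2-1))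
            + UniversalEnvelopingAlgebra.ι ℂ
              ⁅ctx.x (ctx.sroot i) (m - (2-1)), ctx.x (ctx.sroot i) (-1)⁆ from X_comm _ _]
      rw [hbr]
      rw [map_zero, add_zero]
      exact Uplus_le_I0 (mul_mem_Uplus _ (X_mem_Uplus hsri (show (0:ℤ) ≤ m - (2-1) by omega)))
  · by_cases hsum : β + ctx.sroot i ∈ ctx.Δ
    · -- bracket case, uses C_full
      have hs : ctx.sk i β = -1 := C_full hβ i (by rw [← hsimp]; exact hsum)
      rw [hs]
      have hβinn : 0 ≤ β i := ctx.Δ_nonneg β hβ i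
      have hbr : ⁅ctx.x β (m - (-1 - β i)), ctx.x (ctx.sroot i) (-1)⁆
          = ctx.C β (ctx.sroot i) • ctx.x (β + ctx.sroot i) ((m - (-1 - β i)) + (-1)) :=
        br hβ hsri rfl hsum _ _
      rw [show ctx.X β (m - (-1 - β i)) * ctx.X (ctx.sroot i) (-1)
          = ctx.X (ctx.sroot i) (-1) * ctx.X β (m - (-1 - β i))
            + UniversalEnvelopingAlgebra.ι ℂ
              ⁅ctx.x β (m - (-1 - β i)), ctx.x (ctx.sroot i) (-1)⁆ from X_comm _ _]
      rw [hbr, map_smul]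
      apply Uplus_le_I0
      apply ctx.Uplus.add_mem
      · exact mul_mem_Uplus _ (X_mem_Uplus hβ (show (0:ℤ) ≤ m - (-1 - β i) by omega))
      · exact csmul_mem_Uplus _ (X_mem_Uplus hsum
          (show (0:ℤ) ≤ (m - (-1 - β i)) + (-1) by omega))
    · -- commuting case, uses A_ineq
      have hs : ctx.sk i β ≤ β i := A_ineq hβ i (by rw [← hsimp]; exact hβi)
      have hbr : ⁅ctx.x β (m - (ctx.sk i β - β i)), ctx.x (ctx.sroot i) (-1)⁆ = 0 :=
        br0 hβ hsri hsum _ _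
      rw [show ctx.X β (m - (ctx.sk i β - β i)) * ctx.X (ctx.sroot i) (-1)
          = ctx.X (ctx.sroot i) (-1) * ctx.X β (m - (ctx.sk i β - β i))
            + UniversalEnvelopingAlgebra.ι ℂ
              ⁅ctx.x β (m - (ctx.sk i β - β i)), ctx.x (ctx.sroot i) (-1)⁆ from X_comm _ _]
      rw [hbr, map_zero, add_zero]
      exact Uplus_le_I0 (mul_mem_Uplus _ (X_mem_Uplus hβ
        (show (0:ℤ) ≤ m - (ctx.sk i β - β i) by omega)))

end Enveloping

end ADEContext

/-- For every `i = 1, …, l` and every character `ν : Q → ℂ^×` (determined by its values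
`νu j = ν(α_j)`), the map `σ_{ω_i,ν} : a ↦ τ_{ω_i,ν}(a) x_{α_i}(-1)` maps `U(𝔫̄)𝔫̄₊` into
`I_{λ_0}`; in particular, for every positive root `β` and every `m ≥ 0`,
`τ_{ω_i,ν}(x_β(m)) x_{α_i}(-1) ∈ I_{λ_0}`.  Here `τ` is the extension to `U(𝔫̄)` of
`τ_{ω_i,ν}`, acting on generators by `x_α(m) ↦ ν(α) x_α(m - ⟨ω_i, α⟩)`, where
`⟨ω_i, α⟩ = (∑_j m_{ij} α^j) - α^i`. -/
theorem sigma_omega_maps_Uplus_into_I0 (ctx : ADEContext) (i : Fin ctx.l)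
    (νu : Fin ctx.l → ℂˣ) (τ : ctx.U ≃ₐ[ℂ] ctx.U)
    (hτ : ∀ α ∈ ctx.Δ, ∀ m : ℤ,
      τ (ctx.X α m) = ctx.charVal νu α • ctx.X α (m - ((∑ j, ctx.M i j * α j) - α i))) :
    (∀ u ∈ ctx.Uplus, τ u * ctx.X (ctx.sroot i) (-1) ∈ ctx.I0) ∧
    (∀ β ∈ ctx.Δ, ∀ m : ℤ, 0 ≤ m →
      τ (ctx.X β m) * ctx.X (ctx.sroot i) (-1) ∈ ctx.I0) := by
  classical
  have hkey : ∀ β ∈ ctx.Δ, ∀ m : ℤ, 0 ≤ m →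
      τ (ctx.X β m) * ctx.X (ctx.sroot i) (-1) ∈ ctx.I0 := by
    intro β hβ m hm
    rw [hτ β hβ m]
    have hsk : (∑ j, ctx.M i j * β j) = ctx.sk i β := rfl
    rw [hsk, smul_mul_assoc, Algebra.smul_def]
    rw [← smul_eq_mul]
    exact ctx.I0.smul_mem _ (ADEContext.gen_key i hβ hm)
  constructor
  · intro u hu
    induction hu using Submodule.span_induction with
    | mem u hmem =>
      obtain ⟨α, hα, m, hm, rfl⟩ := hmem
      exact hkey α hα m hm
    | zero =>
      rw [map_zero, zero_mul]
      exact ctx.I0.zero_mem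
    | add u v _ _ hu hv =>
      rw [map_add, add_mul]
      exact ctx.I0.add_mem hu hv
    | smul a u _ hu =>
      rw [smul_eq_mul, map_mul, mul_assoc, ← smul_eq_mul]
      exact ctx.I0.smul_mem _ hu
  · exact hkey
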